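/- (Lemma 3.4, pointwise form) Suppose for each k the dual variable satisfies y_k = −∇g_k(w_k) for some w_k ∈ X, where g_k is differentiable with L_k-Lipschitz gradient, suppose ρ_k ≥ 4L_k for every k, and suppose f(x) := Σ_{k=1}^K g_k(x) + h(x) is bounded from below on the nonempty compact convex set X. Then for any x⁺ ∈ X and any points x_k⁺ ∈ E: L({x_k⁺}, x⁺; y) ≥ inf_{x ∈ X} f(x) − diam(X)² Σ_{k=1}^K (L_k/2), where diam(X) := sup{‖x₁ − x₂‖ : x₁, x₂ ∈ X}. In particular, along the Async-PADMM iterates the augmented Lagrangian is bounded below by this quantity. -/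

import Mathlib

open RealInnerProductSpace

/-- The augmented Lagrangian of the consensus problem. -/
noncomputable def augL {E : Type*} [NormedAddCommGroup E] [InnerProductSpace ℝ E]
    {K : ℕ} (g : Fin K → E → ℝ) (h : E → ℝ) (ρ : Fin K → ℝ)
    (xk : Fin K → E) (x : E) (y : Fin K → E) : ℝ :=
  (∑ k, g k (xk k)) + h x + (∑ k, ⟪y k, xk k - x⟫) + ∑ k, ρ k / 2 * ‖xk k - x‖ ^ 2

/-- Descent lemma: quadratic lower bound for a function with Lipschitz gradient. -/
lemma descent_lemma {E : Type*} [NormedAddCommGroup E] [InnerProductSpace ℝ E] [CompleteSpace E]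
    (g : E → ℝ) (L : ℝ) (hL : 0 ≤ L) (hdiff : Differentiable ℝ g)
    (hlip : ∀ u v : E, ‖gradient g u - gradient g v‖ ≤ L * ‖u - v‖) (u v : E) :
    g v + ⟪gradient g v, u - v⟫ - L / 2 * ‖u - v‖ ^ 2 ≤ g u := by
  set d := u - v with hd
  set φ : ℝ → ℝ := fun t => g (v + t • d) - t * ⟪gradient g v, d⟫ + L * t ^ 2 / 2 * ‖d‖ ^ 2 with hφ
  have key : ∀ t : ℝ, HasDerivAt φ
      (⟪gradient g (v + t • d), d⟫ - ⟪gradient g v, d⟫ + L * t * ‖d‖ ^ 2) t := by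
    intro t
    have h1 : HasDerivAt (fun t : ℝ => v + t • d) d t := by
      simpa using ((hasDerivAt_id t).smul_const d).const_add v
    have h2 : HasFDerivAt g
        ((InnerProductSpace.toDualMap ℝ E (gradient g (v + t • d))) : E →L[ℝ] ℝ) (v + t • d) :=
      hasGradientAt_iff_hasFDerivAt.mp (hdiff _).hasGradientAt
    have h3 : HasDerivAt (fun t : ℝ => g (v + t • d)) ⟪gradient g (v + t • d), d⟫ t := by
      exact h2.comp_hasDerivAt t h1
    have h4 : HasDerivAt (fun t : ℝ => t * ⟪gradient g v, d⟫) ⟪gradient g v, d⟫ t := by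
      simpa using (hasDerivAt_id t).mul_const _
    have h5 : HasDerivAt (fun t : ℝ => L * t ^ 2 / 2 * ‖d‖ ^ 2) (L * t * ‖d‖ ^ 2) t := by
      have h6 : HasDerivAt (fun t : ℝ => t ^ 2) (2 * t) t := by
        simpa using hasDerivAt_pow 2 t
      have := ((h6.const_mul L).div_const 2).mul_const (‖d‖ ^ 2)
      rw [show L * t * ‖d‖ ^ 2 = L * (2 * t) / 2 * ‖d‖ ^ 2 by ring]; exact this
    exact (h3.sub h4).add h5
  have hmono : MonotoneOn φ (Set.Icc (0 : ℝ) 1) := by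
    apply monotoneOn_of_deriv_nonneg (convex_Icc 0 1)
    · exact Continuous.continuousOn (by
        have : Continuous fun t : ℝ => g (v + t • d) :=
          hdiff.continuous.comp (by continuity)
        rw [hφ]
        exact (this.sub (by fun_prop)).add (by fun_prop))
    · intro t ht
      exact (key t).differentiableAt.differentiableWithinAt
    · intro t ht
      simp only [interior_Icc, Set.mem_Ioo] at ht
      rw [(key t).deriv]
      have h7 : ‖gradient g (v + t • d) - gradient g v‖ ≤ L * (t * ‖d‖) := by
        have := hlip (v + t • d) v
        simpa [norm_smul, abs_of_nonneg ht.1.le] using this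
      have h8 : |⟪gradient g (v + t • d) - gradient g v, d⟫| ≤ L * (t * ‖d‖) * ‖d‖ :=
        le_trans (abs_real_inner_le_norm _ _)
          (mul_le_mul_of_nonneg_right h7 (norm_nonneg d))
      rw [inner_sub_left] at h8
      have := abs_le.mp h8
      nlinarith [this.1]
  have h01 : φ 0 ≤ φ 1 := hmono (by norm_num) (by norm_num) (by norm_num)
  have e0 : φ 0 = g v := by simp [hφ]
  have e1 : φ 1 = g u - ⟪gradient g v, d⟫ + L / 2 * ‖d‖ ^ 2 := by
    simp only [hφ, one_smul, one_pow, one_mul]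
    rw [hd]
    ring_nf
    rw [show v + (u - v) = u by abel]
    ring
  rw [e0, e1] at h01
  linarith

/-- (Lemma 3.4, pointwise form) If the dual variables satisfy `y_k = −∇g_k(w_k)`
with `w_k ∈ X`, the stepsizes satisfy `ρ_k ≥ 4L_k`, and
`f(x) = ∑_k g_k(x) + h(x)` is bounded below on the nonempty compact convex set
`X`, then for any `x⁺ ∈ X` and any `x_k⁺`:
`L({x_k⁺}, x⁺; y) ≥ inf_{x∈X} f(x) − diam(X)² ∑_k L_k/2`. -/
theorem stmt_10 {E : Type*} [NormedAddCommGroup E] [InnerProductSpace ℝ E] [CompleteSpace E]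
    {K : ℕ} (g : Fin K → E → ℝ) (h : E → ℝ) (L ρ : Fin K → ℝ)
    (X : Set E)
    (hL : ∀ k, 0 < L k) (hρ : ∀ k, 0 < ρ k)
    (hdiff : ∀ k, Differentiable ℝ (g k))
    (hlip : ∀ k, ∀ u v : E, ‖gradient (g k) u - gradient (g k) v‖ ≤ L k * ‖u - v‖)
    (hh : ConvexOn ℝ Set.univ h)
    (hXne : X.Nonempty) (hXcp : IsCompact X) (hXcv : Convex ℝ X)
    (hρL : ∀ k, 4 * L k ≤ ρ k)
    (hbdd : BddBelow ((fun x => (∑ k, g k x) + h x) '' X))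
    (w : Fin K → E) (hw : ∀ k, w k ∈ X)
    (y : Fin K → E) (hy : ∀ k, y k = -gradient (g k) (w k))
    (xp : E) (hxp : xp ∈ X) (xkp : Fin K → E) :
    augL g h ρ xkp xp y
      ≥ sInf ((fun x => (∑ k, g k x) + h x) '' X)
        - Metric.diam X ^ 2 * ∑ k, L k / 2 := by
  set D := Metric.diam X with hD
  have hD0 : 0 ≤ D := Metric.diam_nonneg
  -- per-coordinate bound
  have hterm : ∀ k, g k xp - L k / 2 * D ^ 2 ≤
      g k (xkp k) + ⟪y k, xkp k - xp⟫ + ρ k / 2 * ‖xkp k - xp‖ ^ 2 := by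
    intro k
    set dk := xkp k - xp with hdk
    have hdesc := descent_lemma (g k) (L k) (hL k).le (hdiff k) (hlip k) (xkp k) xp
    have hyk : ⟪y k, dk⟫ = -⟪gradient (g k) (w k), dk⟫ := by
      rw [hy k, inner_neg_left]
    have hwd : ‖xp - w k‖ ≤ D := by
      rw [← dist_eq_norm]
      exact Metric.dist_le_diam_of_mem hXcp.isBounded hxp (hw k)
    have hcs : |⟪gradient (g k) xp, dk⟫ - ⟪gradient (g k) (w k), dk⟫| ≤ L k * D * ‖dk‖ := by
      rw [← inner_sub_left]
      refine le_trans (abs_real_inner_le_norm _ _) ?_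
      refine mul_le_mul_of_nonneg_right (le_trans (hlip k xp (w k)) ?_) (norm_nonneg _)
      exact mul_le_mul_of_nonneg_left hwd (hL k).le
    have hcs' := abs_le.mp hcs
    have hρk := hρL k
    have hLk := hL k
    have hn : (0:ℝ) ≤ ‖dk‖ := norm_nonneg _
    rw [hyk]
    nlinarith [sq_nonneg (D - ‖dk‖), hcs'.1, sq_nonneg ‖dk‖, mul_nonneg hLk.le (sq_nonneg ‖dk‖)]
  have hsum : (∑ k, (g k xp - L k / 2 * D ^ 2)) ≤
      ∑ k, (g k (xkp k) + ⟪y k, xkp k - xp⟫ + ρ k / 2 * ‖xkp k - xp‖ ^ 2) :=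
    Finset.sum_le_sum fun k _ => hterm k
  have hsplit : (∑ k, (g k xp - L k / 2 * D ^ 2)) = (∑ k, g k xp) - D ^ 2 * ∑ k, L k / 2 := by
    rw [Finset.sum_sub_distrib, Finset.mul_sum]
    congr 1
    exact Finset.sum_congr rfl fun k _ => by ring
  have hsplit2 : (∑ k, (g k (xkp k) + ⟪y k, xkp k - xp⟫ + ρ k / 2 * ‖xkp k - xp‖ ^ 2))
      = augL g h ρ xkp xp y - h xp := by
    simp only [augL, Finset.sum_add_distrib]
    ring
  have hinf : sInf ((fun x => (∑ k, g k x) + h x) '' X) ≤ (∑ k, g k xp) + h xp :=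
    csInf_le hbdd ⟨xp, hxp, rfl⟩
  rw [hsplit, hsplit2] at hsum
  linarith
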